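/- arXiv:1009.4926 — 6 statements merged into one kernel-verified Lean document; each statement's English description precedes it below -/
import Mathlib

section
/- For u ∈ (0,π) one has a_{1/2}(u) = 1/(4·cos²(u/2)), and the pushforward under u ↦ 1/(4·cos²(u/2)) of the uniform probability measure on (0,π) is absolutely continuous with density y ↦ 1/(2π·y·√(y − 1/4)) on (1/4, ∞) (and density 0 on (0, 1/4)). -/
open Real MeasureTheory

/-- `c_α(u) = sin(αu)/sin(u)`. -/
noncomputable def kanterC (α u : ℝ) : ℝ := Real.sin (α * u) / Real.sin u

/-- `b_α(u) = c_α(u)^α · c_{1−α}(u)^{1−α}`. -/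
noncomputable def kanterB (α u : ℝ) : ℝ :=
  kanterC α u ^ α * kanterC (1 - α) u ^ (1 - α)

/-- Kanter`s function `a_α(u) = b_α(u)^{1/(1−α)}`. -/
noncomputable def kanterA (α u : ℝ) : ℝ := kanterB α u ^ (1 / (1 - α))

/-- The uniform probability measure on `(0,π)`. -/
noncomputable def uniformIoo : Measure ℝ :=
  (ENNReal.ofReal π)⁻¹ • volume.restrict (Set.Ioo 0 π)

noncomputable def kG (y : ℝ) : ℝ := 2 * Real.arctan (2 * Real.sqrt (y - (1/4 : ℝ)))

lemma kG_nonneg (y : ℝ) : 0 ≤ kG y := by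
  have h : Real.arctan 0 ≤ Real.arctan (2 * Real.sqrt (y - (1/4 : ℝ))) :=
    Real.arctan_strictMono.monotone (by positivity)
  rw [Real.arctan_zero] at h
  unfold kG; linarith

lemma kG_lt_pi (y : ℝ) : kG y < π := by
  have := Real.arctan_lt_pi_div_two (2 * Real.sqrt (y - (1/4 : ℝ)))
  unfold kG; linarith

lemma kG_of_le {y : ℝ} (h : y ≤ (1/4 : ℝ)) : kG y = 0 := by
  unfold kG
  rw [show Real.sqrt (y - (1/4 : ℝ)) = 0 from Real.sqrt_eq_zero'.mpr (by linarith),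
    mul_zero, Real.arctan_zero, mul_zero]

lemma kG_key {u : ℝ} (hu : u ∈ Set.Ioo (0:ℝ) π) (y : ℝ) :
    1 / (4 * Real.cos (u / 2) ^ 2) ≤ y ↔ u ≤ kG y := by
  obtain ⟨hu0, huπ⟩ := hu
  have h1 : 0 < u / 2 := by linarith
  have h2 : u / 2 < π / 2 := by linarith
  have hc : 0 < Real.cos (u / 2) := Real.cos_pos_of_mem_Ioo ⟨by linarith [Real.pi_pos], h2⟩
  have hs2 : 0 < Real.sin (u / 2) :=
    Real.sin_pos_of_pos_of_lt_pi h1 (by linarith [Real.pi_pos])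
  have hpyth : Real.sin (u/2) ^ 2 + Real.cos (u/2) ^ 2 = 1 := Real.sin_sq_add_cos_sq _
  have htpos : 0 < Real.tan (u / 2) := Real.tan_pos_of_pos_of_lt_pi_div_two h1 h2
  set t := 2 * Real.sqrt (y - (1/4 : ℝ)) with ht
  have ht0 : 0 ≤ t := by positivity
  have hA : u ≤ kG y ↔ Real.tan (u / 2) ≤ t := by
    have hmem1 : u / 2 ∈ Set.Ioo (-(π/2)) (π/2) := ⟨by linarith, h2⟩
    have hmem2 := Real.arctan_mem_Ioo t
    have hmono := Real.strictMonoOn_tan.le_iff_le hmem1 hmem2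
    rw [Real.tan_arctan] at hmono
    unfold kG
    rw [← ht]
    constructor
    · intro h; exact hmono.mpr (by linarith)
    · intro h; have := hmono.mp h; linarith
  rw [hA]
  have htan2 : Real.tan (u/2) ^ 2 = 1 / Real.cos (u/2) ^ 2 - 1 := by
    rw [Real.tan_eq_sin_div_cos, div_pow,
      show Real.sin (u/2) ^ 2 = 1 - Real.cos (u/2) ^ 2 by linarith]
    field_simp
  by_cases hy : (1/4 : ℝ) < y
  · have hsq : t ^ 2 = 4 * y - 1 := by
      rw [ht, mul_pow, Real.sq_sqrt (by linarith)]; ring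
    constructor
    · intro h
      have h2' : Real.tan (u/2) ^ 2 ≤ t ^ 2 := by
        rw [htan2, hsq]
        rw [div_le_iff₀ (by positivity)] at h
        have : 1 / Real.cos (u/2) ^ 2 ≤ 4 * y := by
          rw [div_le_iff₀ (by positivity)]; linarith
        linarith
      exact (abs_le_of_sq_le_sq' h2' ht0).2
    · intro h
      have h2' : Real.tan (u/2) ^ 2 ≤ t ^ 2 := sq_le_sq' (by linarith) h
      rw [htan2, hsq] at h2'
      have hle : 1 / Real.cos (u/2) ^ 2 ≤ 4 * y := by linarith
      rw [div_le_iff₀ (by positivity)] at hle ⊢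
      linarith
  · push_neg at hy
    have htz : t = 0 := by
      rw [ht, Real.sqrt_eq_zero'.mpr (by linarith), mul_zero]
    have hclt : Real.cos (u/2) ^ 2 < 1 := by nlinarith
    constructor
    · intro h
      exfalso
      rw [div_le_iff₀ (by positivity)] at h
      nlinarith
    · intro h; rw [htz] at h; exfalso; linarith

private lemma kanter_half_aux₁ : ∀ u ∈ Set.Ioo (0:ℝ) π, kanterA (1/2) u = 1 / (4 * Real.cos (u / 2) ^ 2) := by
  intro u hu
  obtain ⟨hu0, huπ⟩ := hu
  have hs2 : 0 < Real.sin (u / 2) :=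
    Real.sin_pos_of_pos_of_lt_pi (by linarith) (by linarith [Real.pi_pos])
  have hcp : 0 < Real.cos (u / 2) :=
    Real.cos_pos_of_mem_Ioo ⟨by linarith [Real.pi_pos], by linarith⟩
  have hc : kanterC (1/2) u = Real.sin (u/2) / Real.sin u := by
    unfold kanterC; norm_num [mul_comm]
    ring_nf
  have hcpos : 0 < kanterC (1/2) u := by
    rw [hc]
    have hsu : 0 < Real.sin u := Real.sin_pos_of_pos_of_lt_pi hu0 huπ
    positivity
  have hb : kanterB (1/2) u = kanterC (1/2) u := by
    unfold kanterB
    rw [show (1:ℝ) - 1/2 = 1/2 by norm_num, ← Real.rpow_add hcpos]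
    norm_num
  have ha : kanterA (1/2) u = kanterC (1/2) u ^ (2:ℕ) := by
    unfold kanterA
    rw [hb, show (1:ℝ) / (1 - 1/2) = ((2:ℕ):ℝ) by norm_num, Real.rpow_natCast]
  rw [ha, hc]
  have hsin : Real.sin u = 2 * Real.sin (u/2) * Real.cos (u/2) := by
    rw [show u = 2 * (u/2) by ring, Real.sin_two_mul]
    ring_nf
  rw [hsin]
  field_simp
  ring

private lemma kanter_half_aux₂ :
    Measure.map (fun u => 1 / (4 * Real.cos (u / 2) ^ 2)) uniformIoo
      = volume.withDensity (fun y => ENNReal.ofReal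
          (if 1 / 4 < y then 1 / (2 * π * y * Real.sqrt (y - 1 / 4)) else 0)) := by
  have hπ : 0 < π := Real.pi_pos
  have hfm : Measurable (fun u : ℝ => 1 / (4 * Real.cos (u / 2) ^ 2)) := by fun_prop
  haveI hfin : IsFiniteMeasure uniformIoo := by
    constructor
    simp only [uniformIoo, Measure.smul_apply, Measure.restrict_apply MeasurableSet.univ,
      Set.univ_inter, Real.volume_Ioo, smul_eq_mul, sub_zero]
    rw [ENNReal.inv_mul_cancel (by simp [hπ]) ENNReal.ofReal_ne_top]
    exact ENNReal.one_lt_top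
  haveI : IsFiniteMeasure (Measure.map (fun u : ℝ => 1 / (4 * Real.cos (u / 2) ^ 2)) uniformIoo) :=
    Measure.isFiniteMeasure_map uniformIoo _
  apply MeasureTheory.Measure.ext_of_Ioc
  intro a b hab
  -- LHS computation
  have hmap : (Measure.map (fun u : ℝ => 1 / (4 * Real.cos (u / 2) ^ 2)) uniformIoo)
      (Set.Ioc a b) = (ENNReal.ofReal π)⁻¹ * ENNReal.ofReal (kG b - kG a) := by
    rw [Measure.map_apply hfm measurableSet_Ioc]
    have hset : (fun u : ℝ => 1 / (4 * Real.cos (u / 2) ^ 2)) ⁻¹' Set.Ioc a b ∩ Set.Ioo 0 π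
        = Set.Ioc (kG a) (kG b) := by
      ext u
      simp only [Set.mem_inter_iff, Set.mem_preimage, Set.mem_Ioc, Set.mem_Ioo]
      constructor
      · rintro ⟨⟨hau, hub⟩, hu⟩
        refine ⟨?_, (kG_key hu b).mp hub⟩
        by_contra hcon
        push_neg at hcon
        exact absurd ((kG_key hu a).mpr hcon) (not_le.mpr hau)
      · rintro ⟨hau, hub⟩
        have hu : u ∈ Set.Ioo 0 π :=
          ⟨lt_of_le_of_lt (kG_nonneg a) hau, lt_of_le_of_lt hub (kG_lt_pi b)⟩
        refine ⟨⟨?_, (kG_key hu b).mpr hub⟩, hu⟩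
        by_contra hcon
        push_neg at hcon
        exact absurd ((kG_key hu a).mp hcon) (not_le.mpr hau)
    simp only [uniformIoo, Measure.smul_apply,
      Measure.restrict_apply (hfm measurableSet_Ioc), hset, Real.volume_Ioc, smul_eq_mul]
  rw [hmap, withDensity_apply _ measurableSet_Ioc]
  by_cases hb4 : b ≤ 1/4
  · -- everything vanishes
    have h0 : ∀ y ∈ Set.Ioc a b,
        ENNReal.ofReal (if 1 / 4 < y then 1 / (2 * π * y * Real.sqrt (y - 1 / 4)) else 0) = 0 := by
      intro y hy
      rw [if_neg (by push_neg; exact hy.2.trans hb4 : ¬ (1/4 : ℝ) < y), ENNReal.ofReal_zero]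
    rw [setLIntegral_congr_fun measurableSet_Ioc (fun y hy => h0 y hy),
      lintegral_zero, kG_of_le hb4, kG_of_le (by linarith : a ≤ (1/4:ℝ))]
    simp
  · push_neg at hb4
    set c : ℝ := a ⊔ (1/4 : ℝ) with hcdef
    have hc4 : (1/4:ℝ) ≤ c := le_sup_right
    have hcb : c < b := sup_lt_iff.mpr ⟨hab, hb4⟩
    -- indicator rewrite
    have hind : ∀ y : ℝ,
        ENNReal.ofReal (if 1 / 4 < y then 1 / (2 * π * y * Real.sqrt (y - 1 / 4)) else 0)
          = Set.indicator (Set.Ioi (1/4 : ℝ))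
              (fun y => ENNReal.ofReal (1 / (2 * π * y * Real.sqrt (y - 1 / 4)))) y := by
      intro y
      rw [Set.indicator_apply]
      simp only [Set.mem_Ioi]
      split_ifs <;> simp
    simp only [hind]
    rw [lintegral_indicator measurableSet_Ioi, Measure.restrict_restrict measurableSet_Ioi,
      Set.inter_comm, Set.Ioc_inter_Ioi]
    -- integrability
    have hint : IntervalIntegrable (fun y : ℝ => 1 / (2 * π * y * Real.sqrt (y - 1 / 4)))
        volume c b := by
      have hg : IntervalIntegrable (fun y : ℝ => ((y - 1/4 : ℝ)) ^ (-(1/2) : ℝ)) volume c b := by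
        have := (intervalIntegral.intervalIntegrable_rpow' (r := -(1/2))
          (by norm_num) (a := c - 1/4) (b := b - 1/4)).comp_sub_right (1/4)
        simpa using this
      refine IntervalIntegrable.mono_fun (hg.const_mul (2/π)) ?_ ?_
      · exact (Measurable.aestronglyMeasurable (by fun_prop))
      · rw [Set.uIoc_of_le hcb.le]
        filter_upwards [ae_restrict_mem measurableSet_Ioc] with y hy
        have h4 : (1/4:ℝ) < y := lt_of_le_of_lt hc4 hy.1
        have hd : (0:ℝ) < Real.sqrt (y - 1/4) := Real.sqrt_pos.mpr (by linarith)
        have hy0 : (0:ℝ) < y := by linarith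
        have hrw : ((y : ℝ) - 1/4) ^ (-(1/2) : ℝ) = (Real.sqrt (y - 1/4))⁻¹ := by
          rw [Real.rpow_neg (by linarith : (0:ℝ) ≤ y - 1/4), Real.sqrt_eq_rpow]
        rw [Real.norm_eq_abs, Real.norm_eq_abs, abs_of_nonneg (by positivity),
          abs_of_nonneg (by rw [hrw]; positivity), hrw]
        have heq : 2/π * (Real.sqrt (y - 1/4))⁻¹
            = 1 / (2 * π * (1/4) * Real.sqrt (y - 1/4)) := by
          field_simp
          ring
        rw [heq]
        apply one_div_le_one_div_of_le (by positivity)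
        have h24 : 2*π*(1/4) ≤ 2*π*y := by nlinarith [mul_pos hπ (sub_pos.mpr h4)]
        exact mul_le_mul_of_nonneg_right h24 hd.le
    have hIntOn : IntegrableOn (fun y : ℝ => 1 / (2 * π * y * Real.sqrt (y - 1 / 4)))
        (Set.Ioc c b) :=
      (intervalIntegrable_iff_integrableOn_Ioc_of_le hcb.le).mp hint
    rw [← MeasureTheory.ofReal_integral_eq_lintegral_ofReal hIntOn ?_]
    swap
    · filter_upwards [ae_restrict_mem measurableSet_Ioc] with y hy
      have h4 : (1/4:ℝ) < y := lt_of_le_of_lt hc4 hy.1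
      have hd : (0:ℝ) < Real.sqrt (y - 1/4) := Real.sqrt_pos.mpr (by linarith)
      have hy0 : (0:ℝ) < y := by linarith
      positivity
    -- FTC
    have hFTC : ∫ y in Set.Ioc c b, 1 / (2 * π * y * Real.sqrt (y - 1 / 4))
        = kG b / π - kG c / π := by
      rw [← intervalIntegral.integral_of_le hcb.le]
      apply intervalIntegral.integral_eq_sub_of_hasDeriv_right_of_le hcb.le _ _ hint
      · apply Continuous.continuousOn
        unfold kG
        exact ((continuous_const.mul (Real.continuous_arctan.comp
          (continuous_const.mul ((continuous_id.sub continuous_const).sqrt)))).div_const π)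
      · intro x hx
        have h4 : (1/4:ℝ) < x := lt_of_le_of_lt hc4 hx.1
        have hd : (0:ℝ) < x - 1/4 := by linarith
        have hds : (0:ℝ) < Real.sqrt (x - 1/4) := Real.sqrt_pos.mpr hd
        have hx0 : (0:ℝ) < x := by linarith
        have h1 : HasDerivAt (fun y : ℝ => y - 1/4) 1 x := (hasDerivAt_id x).sub_const (1/4)
        have h2 := h1.sqrt hd.ne'
        have h3 := (h2.const_mul (2:ℝ)).arctan
        have h5 := (h3.const_mul (2:ℝ)).div_const π
        have hder : HasDerivAt (fun y => kG y / π)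
            (1 / (2 * π * x * Real.sqrt (x - 1/4))) x := by
          have hval : 2 * (1 / (1 + (2 * Real.sqrt (x - 1/4)) ^ 2)
              * (2 * (1 / (2 * Real.sqrt (x - 1/4))))) / π
              = 1 / (2 * π * x * Real.sqrt (x - 1/4)) := by
            rw [show (1 + (2 * Real.sqrt (x - 1/4)) ^ 2) = 4 * x by
              rw [mul_pow, Real.sq_sqrt hd.le]; ring]
            field_simp
            ring
          rw [← hval]
          unfold kG
          convert h5 using 2
        exact hder.hasDerivWithinAt
    rw [hFTC]
    have hkGc : kG c = kG a := by
      rcases le_or_gt a (1/4 : ℝ) with h | h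
      · rw [hcdef, sup_eq_right.mpr h, kG_of_le le_rfl, kG_of_le h]
      · rw [hcdef, sup_eq_left.mpr h.le]
    rw [hkGc, show kG b / π - kG a / π = (kG b - kG a) / π by ring,
      ENNReal.ofReal_div_of_pos hπ, ENNReal.div_eq_inv_mul]

/-- `a_{1/2}(u) = 1/(4 cos²(u/2))` on `(0,π)`, and the law of
`u ↦ 1/(4 cos²(u/2))` under the uniform measure on `(0,π)` has density
`y ↦ 1/(2π y √(y−1/4))` on `(1/4,∞)` and `0` elsewhere (in particular on `(0,1/4)`). -/
theorem kanter_half :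
    (∀ u ∈ Set.Ioo (0:ℝ) π, kanterA (1/2) u = 1 / (4 * Real.cos (u / 2) ^ 2)) ∧
    Measure.map (fun u => 1 / (4 * Real.cos (u / 2) ^ 2)) uniformIoo
      = volume.withDensity (fun y => ENNReal.ofReal
          (if 1 / 4 < y then 1 / (2 * π * y * Real.sqrt (y - 1 / 4)) else 0)) :=
  ⟨kanter_half_aux₁, kanter_half_aux₂⟩
end

section
/- For every integer j ≥ 2, Π_{k=1}^{j−1} [Γ(k/(j−1) + 1) / Γ(k/j + 1)] = (1/√(2π)) · (1/√(j(j−1))) · j^{j}/(j−1)^{j−1}. -/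
open Real

private lemma abs_one_sub_exp (θ : ℝ) :
    ‖1 - Complex.exp (θ * Complex.I)‖ = 2 * |Real.sin (θ / 2)| := by
  have h : (1 : ℂ) - Complex.exp (θ * Complex.I)
      = Complex.ofReal (1 - Real.cos θ) + Complex.ofReal (-Real.sin θ) * Complex.I := by
    rw [Complex.exp_mul_I]
    push_cast
    ring
  rw [h, Complex.norm_add_mul_I]
  have h2 : (1 - Real.cos θ) ^ 2 + (-Real.sin θ) ^ 2 = (2 * |Real.sin (θ / 2)|) ^ 2 := by
    have hc : Real.cos θ = Real.cos (θ / 2) ^ 2 - Real.sin (θ / 2) ^ 2 := by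
      have h2 := Real.cos_two_mul' (θ / 2)
      rwa [show 2 * (θ / 2) = θ by ring] at h2
    have hpyth : Real.sin (θ / 2) ^ 2 + Real.cos (θ / 2) ^ 2 = 1 := Real.sin_sq_add_cos_sq _
    have habs : |Real.sin (θ / 2)| ^ 2 = Real.sin (θ / 2) ^ 2 := sq_abs _
    nlinarith [Real.sin_sq_add_cos_sq θ]
  rw [h2, Real.sqrt_sq (by positivity)]

set_option maxHeartbeats 1000000 in
private lemma prod_sin_eq (m : ℕ) :
    ∏ k ∈ Finset.Icc 1 m, Real.sin ((k : ℝ) * π / ((m : ℝ) + 1)) = ((m : ℝ) + 1) / 2 ^ m := by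
  have hμ : IsPrimitiveRoot (Complex.exp (2 * (π : ℂ) * Complex.I / ((m + 1 : ℕ) : ℂ))) (m + 1) :=
    Complex.isPrimitiveRoot_exp (m + 1) (Nat.succ_ne_zero m)
  have h := hμ.prod_one_sub_pow_eq_order
  have habs := congrArg (‖·‖) h
  rw [Complex.norm_prod] at habs
  have hterm : ∀ k ∈ Finset.range m,
      ‖1 - Complex.exp (2 * (π : ℂ) * Complex.I / ((m + 1 : ℕ) : ℂ)) ^ (k + 1)‖
        = 2 * Real.sin (((k : ℝ) + 1) * π / ((m : ℝ) + 1)) := by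
    intro k hk
    have hk' : k < m := Finset.mem_range.mp hk
    have hexp : Complex.exp (2 * (π : ℂ) * Complex.I / ((m + 1 : ℕ) : ℂ)) ^ (k + 1)
        = Complex.exp ((2 * π * ((k : ℝ) + 1) / ((m : ℝ) + 1) : ℝ) * Complex.I) := by
      rw [← Complex.exp_nat_mul]
      congr 1
      have hm' : ((m : ℂ) + 1) ≠ 0 := Nat.cast_add_one_ne_zero m
      push_cast
      field_simp
    rw [hexp, abs_one_sub_exp]
    have harg : (2 * π * ((k : ℝ) + 1) / ((m : ℝ) + 1)) / 2 = ((k : ℝ) + 1) * π / ((m : ℝ) + 1) := by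
      ring
    rw [harg, abs_of_nonneg]
    apply Real.sin_nonneg_of_nonneg_of_le_pi
    · positivity
    · rw [div_le_iff₀ (by positivity)]
      have : ((k : ℝ) + 1) ≤ (m : ℝ) + 1 := by
        have : (k : ℝ) + 1 ≤ (m : ℝ) := by exact_mod_cast hk'
        linarith
      nlinarith [Real.pi_pos]
  rw [Finset.prod_congr rfl hterm, Finset.prod_mul_distrib, Finset.prod_const,
    Finset.card_range] at habs
  have habs' : ‖((m : ℂ) + 1)‖ = (m : ℝ) + 1 := by
    rw [show ((m : ℂ) + 1) = ((m + 1 : ℕ) : ℂ) by push_cast; ring, Complex.norm_natCast]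
    push_cast
    ring_nf
  rw [show ((m : ℕ) + 1 : ℂ) = (m : ℂ) + 1 by push_cast; ring] at habs
  rw [habs'] at habs
  have hre : ∏ k ∈ Finset.Icc 1 m, Real.sin ((k : ℝ) * π / ((m : ℝ) + 1))
      = ∏ k ∈ Finset.range m, Real.sin (((k : ℝ) + 1) * π / ((m : ℝ) + 1)) := by
    rw [← Finset.Ico_add_one_right_eq_Icc, Finset.prod_Ico_eq_prod_range]
    apply Finset.prod_congr (by norm_num)
    intro k _
    congr 2
    push_cast
    ring
  rw [hre]
  have h2 : (0 : ℝ) < 2 ^ m := by positivity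
  rw [eq_div_iff h2.ne']
  linarith [habs]

private lemma prod_gamma_eq (m : ℕ) :
    ∏ k ∈ Finset.Icc 1 m, Real.Gamma ((k : ℝ) / ((m : ℝ) + 1))
      = Real.sqrt ((2 * π) ^ m / ((m : ℝ) + 1)) := by
  set P := ∏ k ∈ Finset.Icc 1 m, Real.Gamma ((k : ℝ) / ((m : ℝ) + 1)) with hP
  have hpos : 0 < P := by
    apply Finset.prod_pos
    intro k hk
    obtain ⟨hk1, hk2⟩ := Finset.mem_Icc.mp hk
    apply Real.Gamma_pos_of_pos
    have : (0 : ℝ) < (k : ℝ) := by exact_mod_cast hk1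
    positivity
  have hrefl : P = ∏ k ∈ Finset.Icc 1 m, Real.Gamma (1 - (k : ℝ) / ((m : ℝ) + 1)) := by
    rw [hP]
    apply Finset.prod_nbij' (fun k => m + 1 - k) (fun k => m + 1 - k)
    · intro k hk
      obtain ⟨h1, h2⟩ := Finset.mem_Icc.mp hk
      exact Finset.mem_Icc.mpr ⟨by omega, by omega⟩
    · intro k hk
      obtain ⟨h1, h2⟩ := Finset.mem_Icc.mp hk
      exact Finset.mem_Icc.mpr ⟨by omega, by omega⟩
    · intro k hk
      obtain ⟨h1, h2⟩ := Finset.mem_Icc.mp hk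
      omega
    · intro k hk
      obtain ⟨h1, h2⟩ := Finset.mem_Icc.mp hk
      omega
    · intro k hk
      obtain ⟨h1, h2⟩ := Finset.mem_Icc.mp hk
      congr 1
      have hc : ((m + 1 - k : ℕ) : ℝ) = (m : ℝ) + 1 - (k : ℝ) := by
        have : k ≤ m + 1 := by omega
        push_cast [Nat.cast_sub this]
        ring
      rw [hc]
      field_simp
      ring
  have hsq : P ^ 2 = (2 * π) ^ m / ((m : ℝ) + 1) := by
    have key : P * P = ∏ k ∈ Finset.Icc 1 m,
        (Real.Gamma ((k : ℝ) / ((m : ℝ) + 1)) * Real.Gamma (1 - (k : ℝ) / ((m : ℝ) + 1))) := by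
      rw [Finset.prod_mul_distrib, ← hP, ← hrefl]
    have key2 : P * P = ∏ k ∈ Finset.Icc 1 m, (π / Real.sin ((k : ℝ) * π / ((m : ℝ) + 1))) := by
      rw [key]
      apply Finset.prod_congr rfl
      intro k _
      rw [Real.Gamma_mul_Gamma_one_sub]
      congr 2
      ring
    rw [sq, key2, Finset.prod_div_distrib, Finset.prod_const, prod_sin_eq, Nat.card_Icc]
    simp only [Nat.add_sub_cancel]
    have h1 : (0 : ℝ) < (m : ℝ) + 1 := by positivity
    field_simp
    ring
  rw [← Real.sqrt_sq hpos.le, hsq]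

private lemma eq_of_sq_eq {a b : ℝ} (ha : 0 ≤ a) (hb : 0 ≤ b) (h : a ^ 2 = b ^ 2) : a = b := by
  rw [← Real.sqrt_sq ha, ← Real.sqrt_sq hb, h]

/-- for every integer `j ≥ 2`,
`Π_{k=1}^{j−1} Γ(k/(j−1)+1)/Γ(k/j+1) = (2π)^{−1/2} (j(j−1))^{−1/2} · j^j/(j−1)^{j−1}`. -/
theorem gamma_product_constant {j : ℕ} (hj : 2 ≤ j) :
    ∏ k ∈ Finset.Icc 1 (j - 1),
        Real.Gamma ((k : ℝ) / ((j : ℝ) - 1) + 1) / Real.Gamma ((k : ℝ) / (j : ℝ) + 1)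
      = (1 / Real.sqrt (2 * π)) * (1 / Real.sqrt ((j : ℝ) * ((j : ℝ) - 1))) *
          ((j : ℝ) ^ j / ((j : ℝ) - 1) ^ (j - 1)) := by
  obtain ⟨p, rfl⟩ : ∃ p, j = p + 2 := ⟨j - 2, by omega⟩
  have hsub : p + 2 - 1 = p + 1 := by omega
  rw [hsub]
  have hN : ((p + 2 : ℕ) : ℝ) - 1 = (p : ℝ) + 1 := by push_cast; ring
  have hJ : ((p + 2 : ℕ) : ℝ) = (p : ℝ) + 2 := by push_cast; ring
  set N : ℝ := (p : ℝ) + 1 with hNdef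
  set J : ℝ := (p : ℝ) + 2 with hJdef
  have hNpos : 0 < N := by positivity
  have hJpos : 0 < J := by positivity
  rw [hN, hJ]
  -- split into quotient of products
  rw [Finset.prod_div_distrib]
  -- numerator
  set F : ℝ := ∏ k ∈ Finset.Icc 1 (p + 1), (k : ℝ) with hF
  have hFpos : 0 < F := by
    apply Finset.prod_pos
    intro k hk
    have := (Finset.mem_Icc.mp hk).1
    exact_mod_cast this
  have hnum : ∏ k ∈ Finset.Icc 1 (p + 1), Real.Gamma ((k : ℝ) / N + 1)
      = F / N ^ (p + 1) * Real.sqrt ((2 * π) ^ p / N) := by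
    have step1 : ∀ k ∈ Finset.Icc 1 (p + 1),
        Real.Gamma ((k : ℝ) / N + 1) = ((k : ℝ) / N) * Real.Gamma ((k : ℝ) / N) := by
      intro k hk
      have hk1 := (Finset.mem_Icc.mp hk).1
      have hkpos : (0 : ℝ) < (k : ℝ) := by exact_mod_cast hk1
      exact Real.Gamma_add_one (by positivity)
    rw [Finset.prod_congr rfl step1, Finset.prod_mul_distrib]
    have h1 : ∏ k ∈ Finset.Icc 1 (p + 1), ((k : ℝ) / N) = F / N ^ (p + 1) := by
      rw [Finset.prod_div_distrib, Finset.prod_const, Nat.card_Icc]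
      norm_num
      rfl
    have h2 : ∏ k ∈ Finset.Icc 1 (p + 1), Real.Gamma ((k : ℝ) / N)
        = Real.sqrt ((2 * π) ^ p / N) := by
      rw [Finset.prod_Icc_succ_top (by omega : 1 ≤ p + 1)]
      have hend : Real.Gamma (((p + 1 : ℕ) : ℝ) / N) = 1 := by
        have : ((p + 1 : ℕ) : ℝ) / N = 1 := by
          rw [hNdef]; push_cast; field_simp
        rw [this, Real.Gamma_one]
      rw [hend, mul_one]
      have := prod_gamma_eq p
      rw [hNdef]
      convert this using 2
    rw [h1, h2]
  -- denominator
  have hden : ∏ k ∈ Finset.Icc 1 (p + 1), Real.Gamma ((k : ℝ) / J + 1)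
      = F / J ^ (p + 1) * Real.sqrt ((2 * π) ^ (p + 1) / J) := by
    have step1 : ∀ k ∈ Finset.Icc 1 (p + 1),
        Real.Gamma ((k : ℝ) / J + 1) = ((k : ℝ) / J) * Real.Gamma ((k : ℝ) / J) := by
      intro k hk
      have hk1 := (Finset.mem_Icc.mp hk).1
      have hkpos : (0 : ℝ) < (k : ℝ) := by exact_mod_cast hk1
      exact Real.Gamma_add_one (by positivity)
    rw [Finset.prod_congr rfl step1, Finset.prod_mul_distrib]
    have h1 : ∏ k ∈ Finset.Icc 1 (p + 1), ((k : ℝ) / J) = F / J ^ (p + 1) := by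
      rw [Finset.prod_div_distrib, Finset.prod_const, Nat.card_Icc]
      norm_num
      rfl
    have h2 : ∏ k ∈ Finset.Icc 1 (p + 1), Real.Gamma ((k : ℝ) / J)
        = Real.sqrt ((2 * π) ^ (p + 1) / J) := by
      have := prod_gamma_eq (p + 1)
      rw [hJdef]
      convert this using 2 <;> push_cast <;> ring
    rw [h1, h2]
  rw [hnum, hden]
  -- final algebra
  have hW : (0 : ℝ) < 2 * π := by positivity
  apply eq_of_sq_eq (by positivity) (by positivity)
  set a := Real.sqrt ((2 * π) ^ p / N) with ha
  set b := Real.sqrt ((2 * π) ^ (p + 1) / J) with hb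
  set c := Real.sqrt (2 * π) with hc
  set d := Real.sqrt (J * N) with hd
  have s1 : a ^ 2 = (2 * π) ^ p / N := Real.sq_sqrt (by positivity)
  have s2 : b ^ 2 = (2 * π) ^ (p + 1) / J := Real.sq_sqrt (by positivity)
  have s3 : c ^ 2 = 2 * π := Real.sq_sqrt (by positivity)
  have s4 : d ^ 2 = J * N := Real.sq_sqrt (by positivity)
  simp only [mul_pow, div_pow, one_pow]
  rw [s1, s2, s3, s4]
  have hπ : (0 : ℝ) < π := Real.pi_pos
  field_simp
  ring
end

section
/- For every fixed y > 1, one has lim_{α→0⁺} h_α(y) = 0, where h_α(y) = [(1−α)/π] · Σ_{k=0}^∞ [(−1)^k/k!] · [ sin((1−α)(k+1)π) · Γ((1−α)(k+1)) / Γ(1−α−kα) ] · y^{−(k+1)(1−α)−1} is the density of the Kanter random variable a_α(U). -/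
open Real Set

lemma my_gamma_le_max {x m : ℝ} (h1 : 1 ≤ x) (h2 : x ≤ m) :
    Real.Gamma x ≤ max 1 (Real.Gamma m) := by
  have hm : (0:ℝ) < m := lt_of_lt_of_le one_pos (h1.trans h2)
  have := Real.convexOn_Gamma.le_max_of_mem_Icc (mem_Ioi.2 one_pos) (mem_Ioi.2 hm)
    (z := x) ⟨h1, h2⟩
  simpa [Real.Gamma_one] using this

lemma my_gamma_le_one {x : ℝ} (h1 : 1 ≤ x) (h2 : x ≤ 2) : Real.Gamma x ≤ 1 := by
  have := my_gamma_le_max h1 h2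
  simpa [Real.Gamma_two] using this

lemma my_gamma_mul_gamma_le {s a : ℝ} (hs : 1 ≤ s) (ha : 1 ≤ a) :
    Real.Gamma s * Real.Gamma a ≤ Real.Gamma (s + a - 1) := by
  rcases eq_or_lt_of_le (by linarith : (2:ℝ) ≤ s + a) with h2 | h2
  · have hs1 : s = 1 := by linarith
    have ha1 : a = 1 := by linarith
    simp [hs1, ha1, Real.Gamma_one]
  · set L := s + a - 1 with hL
    have hL1 : 1 < L := by simp only [hL]; linarith
    have hLpos : (0:ℝ) < L := by linarith
    set t := (s - 1) / (L - 1) with ht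
    have htnn : 0 ≤ t := div_nonneg (by linarith) (by linarith)
    have hLne : L - 1 ≠ 0 := by intro h; rw [sub_eq_zero] at h; exact hL1.ne' h
    have ht1 : t ≤ 1 := by
      rw [ht, div_le_one (by linarith)]
      simp only [hL]; linarith
    have htL : t * (L - 1) = s - 1 := by rw [ht]; field_simp
    have hcomb1 : (1 - t) * (1:ℝ) + t * L = s := by nlinarith [htL]
    have hcomb2 : t * (1:ℝ) + (1 - t) * L = a := by
      simp only [hL] at htL ⊢; nlinarith [htL]
    have c1 := Real.convexOn_log_Gamma.2 (mem_Ioi.2 one_pos) (mem_Ioi.2 hLpos)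
      (by linarith : (0:ℝ) ≤ 1 - t) htnn (by ring)
    have c2 := Real.convexOn_log_Gamma.2 (mem_Ioi.2 one_pos) (mem_Ioi.2 hLpos)
      htnn (by linarith : (0:ℝ) ≤ 1 - t) (by ring)
    simp only [smul_eq_mul, Function.comp_apply, hcomb1, hcomb2, Real.Gamma_one,
      Real.log_one, mul_zero, zero_add, add_zero] at c1 c2
    have hsum : Real.log (Real.Gamma s) + Real.log (Real.Gamma a) ≤ Real.log (Real.Gamma L) := by
      nlinarith [c1, c2]
    have hgs := Real.Gamma_pos_of_pos (by linarith : (0:ℝ) < s)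
    have hga := Real.Gamma_pos_of_pos (by linarith : (0:ℝ) < a)
    have hgL := Real.Gamma_pos_of_pos hLpos
    calc Real.Gamma s * Real.Gamma a
        = Real.exp (Real.log (Real.Gamma s) + Real.log (Real.Gamma a)) := by
          rw [Real.exp_add, Real.exp_log hgs, Real.exp_log hga]
      _ ≤ Real.exp (Real.log (Real.Gamma L)) := Real.exp_le_exp.2 hsum
      _ = Real.Gamma L := Real.exp_log hgL

set_option maxHeartbeats 1000000 in
/-- for fixed `y > 1`, the density
`h_α(y) = [(1−α)/π] Σ_k (−1)^k/k! · sin((1−α)(k+1)π)Γ((1−α)(k+1))/Γ(1−α−kα) · y^{−(k+1)(1−α)−1}`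
of the Kanter random variable tends to `0` as `α → 0⁺`. -/
theorem kanter_density_tendsto_zero {y : ℝ} (hy : 1 < y) :
    Filter.Tendsto
      (fun α : ℝ => ((1 - α) / π) * ∑' k : ℕ,
        (-1 : ℝ) ^ k / k.factorial *
          (Real.sin ((1 - α) * ((k : ℝ) + 1) * π) * Real.Gamma ((1 - α) * ((k : ℝ) + 1)) /
            Real.Gamma (1 - α - (k : ℝ) * α)) *
          y ^ (-(((k : ℝ) + 1) * (1 - α)) - 1))
      (nhdsWithin 0 (Set.Ioi 0)) (nhds 0) := by
  have hy0 : (0:ℝ) < y := by linarith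
  have hπ := Real.pi_pos
  set r : ℝ := y ^ (-(1/2) : ℝ) with hr
  have hr0 : 0 ≤ r := Real.rpow_nonneg hy0.le _
  have hr1 : r < 1 := Real.rpow_lt_one_of_one_lt_of_neg hy (by norm_num)
  set f : ℝ → ℕ → ℝ := fun α k =>
    (-1 : ℝ) ^ k / k.factorial *
      (Real.sin ((1 - α) * ((k : ℝ) + 1) * π) * Real.Gamma ((1 - α) * ((k : ℝ) + 1)) /
        Real.Gamma (1 - α - (k : ℝ) * α)) *
      y ^ (-(((k : ℝ) + 1) * (1 - α)) - 1) with hf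
  have hsum : Summable (fun k : ℕ => 2 * π * r ^ k) :=
    (summable_geometric_of_lt_one hr0 hr1).mul_left _
  -- pointwise convergence to 0
  have hpt : ∀ k : ℕ, Filter.Tendsto (fun α => f α k) (nhdsWithin 0 (Set.Ioi 0)) (nhds 0) := by
    intro k
    have hk1 : (0:ℝ) < (k:ℝ) + 1 := by positivity
    have hc1 : ContinuousAt (fun α : ℝ => (1 - α) * ((k:ℝ) + 1)) 0 := by fun_prop
    have hc2 : ContinuousAt (fun α : ℝ => 1 - α - (k:ℝ) * α) 0 := by fun_prop
    have hG1 : ContinuousAt Real.Gamma ((1 - (0:ℝ)) * ((k:ℝ) + 1)) := by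
      refine (Real.differentiableAt_Gamma ?_).continuousAt
      intro m h
      have hm : (0:ℝ) ≤ (m:ℝ) := m.cast_nonneg
      nlinarith [h]
    have hG2 : ContinuousAt Real.Gamma (1 - (0:ℝ) - (k:ℝ) * 0) := by
      refine (Real.differentiableAt_Gamma ?_).continuousAt
      intro m h
      have hm : (0:ℝ) ≤ (m:ℝ) := m.cast_nonneg
      nlinarith [h]
    have hcont : ContinuousAt (fun α : ℝ => f α k) 0 := by
      apply ContinuousAt.mul
      · apply ContinuousAt.mul continuousAt_const
        apply ContinuousAt.div
        · exact ((Real.continuous_sin.continuousAt).comp (by fun_prop)).mul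
            (ContinuousAt.comp (f := fun α : ℝ => (1 - α) * ((k:ℝ) + 1)) hG1 hc1)
        · exact ContinuousAt.comp (f := fun α : ℝ => 1 - α - (k:ℝ) * α) hG2 hc2
        · simp [Real.Gamma_one]
      · apply ContinuousAt.rpow continuousAt_const (by fun_prop)
        exact Or.inl (ne_of_gt hy0)
    have hval : f 0 k = 0 := by
      have h1 : ((1:ℝ) - 0) * ((k:ℝ) + 1) * π = ((k+1 : ℕ):ℝ) * π := by push_cast; ring
      simp only [hf, h1, Real.sin_nat_mul_pi, zero_mul, mul_zero, zero_div]
    have := hcont.tendsto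
    rw [hval] at this
    exact this.mono_left nhdsWithin_le_nhds
  -- uniform bound
  have hbound : ∀ᶠ α in nhdsWithin (0:ℝ) (Set.Ioi 0), ∀ k : ℕ, ‖f α k‖ ≤ 2 * π * r ^ k := by
    filter_upwards [Ioo_mem_nhdsGT_of_mem (by norm_num : (0:ℝ) ∈ Set.Ico (0:ℝ) (1/2))]
      with α hα k
    obtain ⟨hα0, hα2⟩ := hα
    have hfa1 : 1 ≤ (k.factorial:ℝ) := by exact_mod_cast k.factorial_pos
    have hk0 : (0:ℝ) ≤ (k:ℝ) := k.cast_nonneg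
    set s := ((k:ℝ)+1) * α with hsdef
    set a := (1-α) * ((k:ℝ)+1) with hadef
    set e := -(((k:ℝ)+1) * (1-α)) - 1 with hedef
    have hs0 : 0 < s := by rw [hsdef]; positivity
    have ha0 : 0 < a := by rw [hadef]; nlinarith
    have hsle : s ≤ ((k:ℝ)+1)/2 := by rw [hsdef]; nlinarith
    have hgs := Real.Gamma_pos_of_pos hs0
    have hga := Real.Gamma_pos_of_pos ha0
    have hye_pos : (0:ℝ) < y ^ e := Real.rpow_pos_of_pos hy0 _
    have e2 : Real.sin ((1-α) * ((k:ℝ)+1) * π) = (-1:ℝ)^k * Real.sin (π * s) := by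
      have h1 : (1-α) * ((k:ℝ)+1) * π = ((k+1 : ℕ):ℝ) * π - π * s := by
        rw [hsdef]; push_cast; ring
      rw [h1, Real.sin_nat_mul_pi_sub]
      push_cast [pow_succ]; ring
    have e1 : (1:ℝ) - α - (k:ℝ) * α = 1 - s := by rw [hsdef]; ring
    have hfval : f α k = (1/(k.factorial:ℝ)) *
        (Real.sin (π*s) * Real.Gamma a / Real.Gamma (1-s)) * y ^ e := by
      simp only [hf]
      rw [e2, e1]
      have h4 : ((-1:ℝ))^k * (-1:ℝ)^k = 1 := by rw [← mul_pow]; norm_num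
      simp only [div_eq_mul_inv]
      linear_combination (Real.sin (π*s) * Real.Gamma a * (Real.Gamma (1-s))⁻¹ *
        y ^ e * ((k.factorial:ℝ))⁻¹) * h4
    by_cases hzero : Real.sin (π*s) = 0
    · rw [hfval, hzero]
      simp only [zero_mul, zero_div, mul_zero, norm_zero]
      positivity
    · have hrefl := Real.Gamma_mul_Gamma_one_sub s
      have hG1s : Real.Gamma (1-s) * (Real.sin (π*s) * Real.Gamma s) = π := by
        rw [eq_div_iff hzero] at hrefl
        linear_combination hrefl
      have hG1s_ne : Real.Gamma (1-s) ≠ 0 := by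
        intro h; rw [h, zero_mul] at hG1s; exact hπ.ne hG1s
      have hquot : Real.sin (π*s) * Real.Gamma a / Real.Gamma (1-s)
          = Real.sin (π*s)^2 * Real.Gamma s * Real.Gamma a / π := by
        rw [div_eq_div_iff hG1s_ne hπ.ne']
        linear_combination (-(Real.sin (π*s) * Real.Gamma a)) * hG1s
      have hkey : Real.sin (π*s)^2 * Real.Gamma s * Real.Gamma a
          ≤ 2 * π^2 * (k.factorial:ℝ) := by
        rcases le_or_gt s 1 with hs1 | hs1
        · -- small s
          have habs := Real.abs_sin_le_abs (x := π*s)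
          have hsin2 : Real.sin (π*s)^2 ≤ (π*s)^2 := by
            rw [← sq_abs (Real.sin (π*s)), ← sq_abs (π*s)]
            exact pow_le_pow_left₀ (abs_nonneg _) habs 2
          have hgamma_s : Real.Gamma s * s = Real.Gamma (s+1) := by
            rw [Real.Gamma_add_one hs0.ne']; ring
          have hgs1 : Real.Gamma (s+1) ≤ 1 := my_gamma_le_one (by linarith) (by linarith)
          have hgs1' : 0 < Real.Gamma (s+1) := Real.Gamma_pos_of_pos (by linarith)
          have hGa : Real.Gamma a ≤ 2 * (k.factorial:ℝ) := by
            rcases Nat.eq_zero_or_pos k with hk00 | hkpos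
            · subst hk00
              have ha' : a = 1 - α := by rw [hadef]; push_cast; ring
              have h2a : Real.Gamma ((1-α)+1) = (1-α) * Real.Gamma (1-α) :=
                Real.Gamma_add_one (by linarith)
              have h3a : Real.Gamma ((1-α)+1) ≤ 1 := my_gamma_le_one (by linarith) (by linarith)
              have h4a : 0 < Real.Gamma (1-α) := Real.Gamma_pos_of_pos (by linarith)
              simp only [Nat.factorial_zero, Nat.cast_one, mul_one]
              rw [ha']
              nlinarith
            · have hk1' : (1:ℝ) ≤ (k:ℝ) := by exact_mod_cast hkpos
              have h1a : 1 ≤ a := by rw [hadef]; nlinarith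
              have h2a : a ≤ (k:ℝ)+1 := by rw [hadef]; nlinarith
              have h3a := my_gamma_le_max h1a h2a
              rw [Real.Gamma_nat_eq_factorial, max_eq_right hfa1] at h3a
              linarith
          have hga_nn : (0:ℝ) ≤ Real.Gamma a := hga.le
          have b0 : s * Real.Gamma (s+1) ≤ 1 := by nlinarith
          have b1 : π^2 * s * Real.Gamma (s+1) ≤ π^2 := by nlinarith [sq_nonneg π]
          calc Real.sin (π*s)^2 * Real.Gamma s * Real.Gamma a
              ≤ (π*s)^2 * Real.Gamma s * Real.Gamma a :=
                mul_le_mul_of_nonneg_right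
                  (mul_le_mul_of_nonneg_right hsin2 hgs.le) hga_nn
            _ = π^2 * s * (Real.Gamma s * s) * Real.Gamma a := by ring
            _ = π^2 * s * Real.Gamma (s+1) * Real.Gamma a := by rw [hgamma_s]
            _ ≤ π^2 * (2 * (k.factorial:ℝ)) := by
                apply mul_le_mul b1 hGa hga_nn (by positivity)
            _ = 2 * π^2 * (k.factorial:ℝ) := by ring
        · -- large s
          have hk2 : (2:ℝ) ≤ (k:ℝ) := by
            have hg1 : (1:ℝ) < (k:ℝ) := by nlinarith
            have hg2 : 1 < k := by exact_mod_cast hg1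
            exact_mod_cast hg2
          have h1a : 1 ≤ a := by rw [hadef]; nlinarith
          have hmul := my_gamma_mul_gamma_le hs1.le h1a
          have hsa : s + a - 1 = (k:ℝ) := by rw [hsdef, hadef]; ring
          rw [hsa] at hmul
          have hGk : Real.Gamma ((k:ℝ)) ≤ (k.factorial:ℝ) := by
            have hknat : 1 ≤ k := by exact_mod_cast (by linarith : (1:ℝ) ≤ (k:ℝ))
            have hk1' : ((k-1:ℕ):ℝ) + 1 = (k:ℝ) := by
              push_cast [Nat.cast_sub hknat]; ring
            rw [← hk1', Real.Gamma_nat_eq_factorial]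
            exact_mod_cast Nat.factorial_le (Nat.sub_le k 1)
          have hsin1 : Real.sin (π*s)^2 ≤ 1 := by
            nlinarith [Real.neg_one_le_sin (π*s), Real.sin_le_one (π*s)]
          have hπ1 : (1:ℝ) ≤ π^2 := by nlinarith [Real.pi_gt_three]
          calc Real.sin (π*s)^2 * Real.Gamma s * Real.Gamma a
              = Real.sin (π*s)^2 * (Real.Gamma s * Real.Gamma a) := by ring
            _ ≤ 1 * (Real.Gamma s * Real.Gamma a) :=
                mul_le_mul_of_nonneg_right hsin1 (mul_pos hgs hga).le
            _ = Real.Gamma s * Real.Gamma a := one_mul _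
            _ ≤ (k.factorial:ℝ) := hmul.trans hGk
            _ ≤ 2 * π^2 * (k.factorial:ℝ) := by nlinarith
      -- finish
      have hy_e : y ^ e ≤ r ^ k := by
        have hekey : e ≤ -(1/2) * (k:ℝ) := by rw [hedef]; nlinarith
        calc y ^ e ≤ y ^ (-(1/2) * (k:ℝ)) := Real.rpow_le_rpow_of_exponent_le hy.le hekey
          _ = r ^ k := by
              rw [hr, Real.rpow_mul hy0.le, Real.rpow_natCast]
      rw [hfval, hquot, Real.norm_eq_abs]
      have hnn : (0:ℝ) ≤ (1/(k.factorial:ℝ)) *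
          (Real.sin (π*s)^2 * Real.Gamma s * Real.Gamma a / π) * y ^ e := by
        apply mul_nonneg (mul_nonneg (by positivity) _) hye_pos.le
        exact div_nonneg (mul_nonneg (mul_nonneg (sq_nonneg _) hgs.le) hga.le) hπ.le
      rw [abs_of_nonneg hnn]
      have step1 : (1/(k.factorial:ℝ)) * (Real.sin (π*s)^2 * Real.Gamma s * Real.Gamma a / π) * y ^ e
          ≤ (1/(k.factorial:ℝ)) * ((2 * π^2 * (k.factorial:ℝ)) / π) * y ^ e := by
        apply mul_le_mul_of_nonneg_right _ hye_pos.le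
        apply mul_le_mul_of_nonneg_left _ (by positivity)
        exact (div_le_div_iff_of_pos_right hπ).2 hkey
      have step2 : (1/(k.factorial:ℝ)) * ((2 * π^2 * (k.factorial:ℝ)) / π) = 2 * π := by
        field_simp
      have step3 : 2 * π * y ^ e ≤ 2 * π * r ^ k :=
        mul_le_mul_of_nonneg_left hy_e (by positivity)
      calc (1/(k.factorial:ℝ)) * (Real.sin (π*s)^2 * Real.Gamma s * Real.Gamma a / π) * y ^ e
          ≤ (1/(k.factorial:ℝ)) * ((2 * π^2 * (k.factorial:ℝ)) / π) * y ^ e := step1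
        _ = 2 * π * y ^ e := by rw [step2]
        _ ≤ 2 * π * r ^ k := step3
  have h2 : Filter.Tendsto (fun α => ∑' k, f α k) (nhdsWithin (0:ℝ) (Set.Ioi 0))
      (nhds (∑' _ : ℕ, (0:ℝ))) :=
    tendsto_tsum_of_dominated_convergence hsum hpt hbound
  rw [tsum_zero] at h2
  have h1 : Filter.Tendsto (fun α : ℝ => (1 - α) / π) (nhdsWithin (0:ℝ) (Set.Ioi 0))
      (nhds ((1 - 0) / π)) := by
    apply Filter.Tendsto.mono_left _ nhdsWithin_le_nhds
    exact (Continuous.tendsto (by fun_prop) 0)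
  have := h1.mul h2
  rw [mul_zero] at this
  exact this
end

section
/- As α → 0⁺, the pushforward under a_α of the uniform probability measure on (0,π) converges weakly (in distribution) to the Dirac measure δ_1 at the point 1. -/
open Real MeasureTheory

open Filter Topology

lemma measurable_kanterA (α : ℝ) : Measurable (kanterA α) := by
  unfold kanterA kanterB kanterC
  fun_prop

instance : IsProbabilityMeasure uniformIoo := by
  constructor
  rw [uniformIoo]
  simp only [Measure.smul_apply, Measure.restrict_apply MeasurableSet.univ,
    Set.univ_inter, Real.volume_Ioo, smul_eq_mul, sub_zero]
  exact ENNReal.inv_mul_cancel (by simp [Real.pi_pos]) (by simp)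

lemma tendsto_sinc : Tendsto (fun x : ℝ => Real.sin x / x) (𝓝[≠] 0) (𝓝 1) := by
  have h := hasDerivAt_iff_tendsto_slope.mp (Real.hasDerivAt_sin 0)
  have hs : slope Real.sin 0 = fun x => Real.sin x / x := by
    funext x; simp [slope_def_field]
  rw [hs, Real.cos_zero] at h
  exact h

lemma tendsto_kanterA (u : ℝ) (hu : u ∈ Set.Ioo 0 π) :
    Tendsto (fun α => kanterA α u) (𝓝[>] (0:ℝ)) (𝓝 1) := by
  obtain ⟨hu0, huπ⟩ := hu
  have hsu : 0 < Real.sin u := Real.sin_pos_of_pos_of_lt_pi hu0 huπ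
  have hα1 : ∀ᶠ α : ℝ in 𝓝[>] 0, α ∈ Set.Ioo (0:ℝ) 1 :=
    Ioo_mem_nhdsGT_of_mem ⟨le_refl 0, one_pos⟩
  -- sin(αu) positive for α ∈ (0,1)
  have hsin_pos : ∀ α : ℝ, α ∈ Set.Ioo (0:ℝ) 1 → 0 < Real.sin (α * u) := by
    intro α ⟨h0, h1⟩
    exact Real.sin_pos_of_pos_of_lt_pi (mul_pos h0 hu0)
      (lt_trans (by nlinarith) huπ)
  -- α ↦ α*u tends to 0 within ≠ 0
  have hmul : Tendsto (fun α : ℝ => α * u) (𝓝[>] 0) (𝓝[≠] 0) := by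
    apply tendsto_nhdsWithin_of_tendsto_nhds_of_eventually_within
    · have : Tendsto (fun α : ℝ => α * u) (𝓝 0) (𝓝 (0 * u)) :=
        (continuous_id.mul continuous_const).tendsto 0
      simpa using this.mono_left nhdsWithin_le_nhds
    · filter_upwards [self_mem_nhdsWithin] with α hα
      exact (mul_pos hα hu0).ne'
  have hg : Tendsto (fun α : ℝ => Real.sin (α * u) / (α * u)) (𝓝[>] 0) (𝓝 1) :=
    tendsto_sinc.comp hmul
  have hid : Tendsto (fun α : ℝ => α) (𝓝[>] 0) (𝓝 0) :=
    tendsto_id.mono_left nhdsWithin_le_nhds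
  -- Factor 1 : α ^ α → 1
  have h1 : Tendsto (fun α : ℝ => α ^ α) (𝓝[>] 0) (𝓝 1) := by
    have hml : Tendsto (fun α : ℝ => α * Real.log α) (𝓝 0) (𝓝 0) := by
      have := Real.continuous_mul_log.tendsto 0
      simpa using this
    have hml' : Tendsto (fun α : ℝ => α * Real.log α) (𝓝[>] 0) (𝓝 0) :=
      hml.mono_left nhdsWithin_le_nhds
    have := (Real.continuous_exp.tendsto 0).comp hml'
    rw [Real.exp_zero] at this
    apply this.congr'
    filter_upwards [self_mem_nhdsWithin] with α hα
    rw [Function.comp_apply, Real.rpow_def_of_pos hα, mul_comm]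
  -- Factor 2 : (sin(αu)/(α sin u)) ^ α → 1
  have hg2 : Tendsto (fun α : ℝ => Real.sin (α * u) / (α * Real.sin u)) (𝓝[>] 0)
      (𝓝 (u / Real.sin u)) := by
    have h := hg.mul_const (u / Real.sin u)
    rw [one_mul] at h
    apply h.congr'
    filter_upwards [self_mem_nhdsWithin] with α hα
    have h1 : (α:ℝ) ≠ 0 := (Set.mem_Ioi.mp hα).ne'
    have h2 : u ≠ 0 := hu0.ne'
    have h3 : Real.sin u ≠ 0 := hsu.ne'
    field_simp
  have h2 : Tendsto (fun α : ℝ => (Real.sin (α * u) / (α * Real.sin u)) ^ α) (𝓝[>] 0)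
      (𝓝 1) := by
    have := hg2.rpow hid (Or.inl (by positivity))
    simpa using this
  -- Factor 3
  have h3 : Tendsto (fun α : ℝ => (Real.sin ((1 - α) * u) / Real.sin u) ^ (1 - α))
      (𝓝[>] 0) (𝓝 1) := by
    have hb : Tendsto (fun α : ℝ => Real.sin ((1 - α) * u) / Real.sin u) (𝓝 0)
        (𝓝 (Real.sin ((1 - 0) * u) / Real.sin u)) := by
      exact ((Real.continuous_sin.comp ((continuous_const.sub continuous_id).mul
        continuous_const)).div_const _).tendsto 0
    have hb' : Tendsto (fun α : ℝ => Real.sin ((1 - α) * u) / Real.sin u) (𝓝[>] 0)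
        (𝓝 1) := by
      have : Real.sin ((1 - 0) * u) / Real.sin u = 1 := by
        rw [sub_zero, one_mul, div_self hsu.ne']
      rw [this] at hb
      exact hb.mono_left nhdsWithin_le_nhds
    have he : Tendsto (fun α : ℝ => (1:ℝ) - α) (𝓝[>] 0) (𝓝 1) := by
      have h' : Tendsto (fun α : ℝ => (1:ℝ) - α) (𝓝 0) (𝓝 (1 - 0)) :=
        (continuous_const.sub continuous_id).tendsto 0
      simpa using h'.mono_left nhdsWithin_le_nhds
    have := hb'.rpow he (Or.inl one_ne_zero)
    simpa using this
  -- combine to kanterB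
  have hB : Tendsto (fun α : ℝ => kanterB α u) (𝓝[>] 0) (𝓝 1) := by
    have h := (h1.mul h2).mul h3
    rw [mul_one, one_mul] at h
    apply h.congr'
    filter_upwards [hα1] with α hα
    have hα0 := hα.1
    have hsp := hsin_pos α hα
    have hfac : Real.sin (α * u) / Real.sin u
        = α * (Real.sin (α * u) / (α * Real.sin u)) := by
      field_simp
    unfold kanterB kanterC
    rw [hfac, Real.mul_rpow hα0.le (by positivity)]
  -- final rpow
  have hexp : Tendsto (fun α : ℝ => 1 / (1 - α)) (𝓝[>] 0) (𝓝 1) := by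
    have : Tendsto (fun α : ℝ => 1 / (1 - α)) (𝓝 0) (𝓝 (1 / (1 - 0))) :=
      (ContinuousAt.div continuousAt_const
        (continuous_const.sub continuous_id).continuousAt (by norm_num))
    simpa using this.mono_left nhdsWithin_le_nhds
  have := hB.rpow hexp (Or.inl one_ne_zero)
  simpa [kanterA] using this

/-- as `α → 0⁺`, the law of the Kanter random variable `a_α(U)` converges
weakly to the Dirac mass at `1`: for every bounded continuous `f`,
`∫ f d(a_α)_*(uniform) → f(1)`. -/
theorem kanter_weak_convergence :
    ∀ f : BoundedContinuousFunction ℝ ℝ,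
      Filter.Tendsto (fun α : ℝ => ∫ x, f x ∂(Measure.map (kanterA α) uniformIoo))
        (nhdsWithin 0 (Set.Ioi 0)) (nhds (f 1)) := by
  intro f
  have hmem : ∀ᵐ u ∂uniformIoo, u ∈ Set.Ioo 0 π := by
    rw [uniformIoo]
    exact Measure.ae_smul_measure (ae_restrict_mem measurableSet_Ioo) _
  have hrw : ∀ α : ℝ, (∫ x, f x ∂(Measure.map (kanterA α) uniformIoo))
      = ∫ u, f (kanterA α u) ∂uniformIoo := fun α =>
    integral_map (measurable_kanterA α).aemeasurable
      (f.continuous.aestronglyMeasurable)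
  simp only [hrw]
  have hfin : (f 1 : ℝ) = ∫ _u, f 1 ∂uniformIoo := by
    rw [integral_const]; simp
  rw [hfin]
  apply tendsto_integral_filter_of_dominated_convergence (fun _ => ‖f‖)
  · exact Filter.Eventually.of_forall fun α =>
      (f.continuous.measurable.comp (measurable_kanterA α)).aestronglyMeasurable
  · exact Filter.Eventually.of_forall fun α =>
      ae_of_all _ fun u => f.norm_coe_le_norm _
  · exact integrable_const _
  · filter_upwards [hmem] with u hu
    exact (f.continuous.tendsto 1).comp (tendsto_kanterA u hu)
end

section
/- For every fixed x > 1, lim_{α→0⁺} Σ_{k=0}^∞ [(−1)^k / (k! · Γ(1−kα) · Γ(1−k(1−α)))] · x^{−k} = 1 (here 1/Γ is interpreted as 0 at the nonpositive-integer poles of Γ); equivalently, lim_{α→0⁺} (1/π)·a_{1−α}^{−1}(x^{1/α}) = 1. -/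
open Real

lemma gamma_superadd {a b : ℝ} (ha : 0 < a) (hb : 1 ≤ b) :
    Real.Gamma (a + 1) * Real.Gamma b ≤ Real.Gamma (a + b) := by
  have hab : 0 < a + b - 1 := by linarith
  set t : ℝ := a / (a + b - 1) with ht
  have ht0 : 0 ≤ t := by positivity
  have ht1 : t ≤ 1 := by rw [ht, div_le_one hab]; linarith
  have hconv := Real.convexOn_log_Gamma
  have h1 : (1:ℝ) ∈ Set.Ioi (0:ℝ) := by norm_num
  have h2 : a + b ∈ Set.Ioi (0:ℝ) := by simp only [Set.mem_Ioi]; linarith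
  have hta : t * (a + b - 1) = a := by rw [ht]; exact div_mul_cancel₀ a hab.ne'
  have e1 : (1 - t) * 1 + t * (a + b) = a + 1 := by
    field_simp [ht]
    linear_combination hta
  have e2 : t * 1 + (1 - t) * (a + b) = b := by
    field_simp [ht]
    linear_combination (-1:ℝ) * hta
  have c1 := hconv.2 h1 h2 (by linarith : (0:ℝ) ≤ 1 - t) ht0 (by ring)
  have c2 := hconv.2 h1 h2 ht0 (by linarith : (0:ℝ) ≤ 1 - t) (by ring)
  simp only [smul_eq_mul, Function.comp_apply] at c1 c2
  rw [e1] at c1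
  rw [e2] at c2
  have hsum : Real.log (Real.Gamma (a+1)) + Real.log (Real.Gamma b)
      ≤ Real.log (Real.Gamma (a + b)) := by
    have hg1 : Real.log (Real.Gamma 1) = 0 := by rw [Real.Gamma_one, Real.log_one]
    rw [hg1] at c1 c2
    linarith
  have hpos1 : 0 < Real.Gamma (a + 1) := Real.Gamma_pos_of_pos (by linarith)
  have hpos2 : 0 < Real.Gamma b := Real.Gamma_pos_of_pos (by linarith)
  have hpos3 : 0 < Real.Gamma (a + b) := Real.Gamma_pos_of_pos (by linarith)
  calc Real.Gamma (a+1) * Real.Gamma b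
      = Real.exp (Real.log (Real.Gamma (a+1)) + Real.log (Real.Gamma b)) := by
        rw [Real.exp_add, Real.exp_log hpos1, Real.exp_log hpos2]
    _ ≤ Real.exp (Real.log (Real.Gamma (a+b))) := Real.exp_le_exp.2 hsum
    _ = Real.Gamma (a + b) := Real.exp_log hpos3


lemma key_bound {α : ℝ} (hα0 : 0 < α) (hα2 : α < 1/2) {k : ℕ} (hk : 1 ≤ k) :
    |(-1:ℝ)^k / (k.factorial * Real.Gamma (1 - (k:ℝ) * α)
        * Real.Gamma (1 - (k:ℝ) * (1 - α)))| ≤ α := by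
  set t : ℝ := (k:ℝ) * α with htdef
  have hkpos : (0:ℝ) < k := by exact_mod_cast hk
  have ht0 : 0 < t := by positivity
  by_cases hint : ∃ n : ℕ, t = n + 1
  · obtain ⟨n, hn⟩ := hint
    have : Real.Gamma (1 - t) = 0 := by
      have : (1:ℝ) - t = -(n:ℝ) := by rw [hn]; ring
      rw [this]
      exact Real.Gamma_neg_nat_eq_zero n
    rw [this]
    simp only [mul_zero, zero_mul, div_zero, abs_zero]
    linarith
  · push_neg at hint
    -- both Gammas nonzero
    have hne1 : Real.Gamma (1 - t) ≠ 0 := by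
      apply Real.Gamma_ne_zero
      intro m hm
      exact hint m (by linarith [hm])
    have hne2 : Real.Gamma (1 - (k:ℝ) * (1 - α)) ≠ 0 := by
      apply Real.Gamma_ne_zero
      intro m hm
      have hkt : t = (k:ℝ) - 1 - m := by push_cast at hm ⊢; linarith [hm]
      have hmk : (m:ℝ) + 1 < k := by linarith
      have hmkn : m + 1 < k := by exact_mod_cast hmk
      have e : ((k - m - 2 : ℕ) : ℝ) = (k:ℝ) - (m:ℝ) - 2 := by
        rw [Nat.sub_sub, Nat.cast_sub (by omega : m + 2 ≤ k)]
        push_cast; ring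
      exact hint (k - m - 2) (by rw [hkt, e]; ring)
    -- reflection
    have hrefl1 := Real.Gamma_mul_Gamma_one_sub t
    have hrefl2 := Real.Gamma_mul_Gamma_one_sub ((k:ℝ) * (1 - α))
    have hG1pos : 0 < Real.Gamma t := Real.Gamma_pos_of_pos ht0
    have hG2pos : 0 < Real.Gamma ((k:ℝ) * (1 - α)) :=
      Real.Gamma_pos_of_pos (by nlinarith)
    have hsin1ne : Real.sin (π * t) ≠ 0 := by
      intro h
      rw [h, div_zero] at hrefl1
      exact (mul_ne_zero hG1pos.ne' hne1) hrefl1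
    have hsin2ne : Real.sin (π * ((k:ℝ) * (1 - α))) ≠ 0 := by
      intro h
      rw [h, div_zero] at hrefl2
      exact (mul_ne_zero hG2pos.ne' hne2) hrefl2
    -- |Γ(1 - t)| = π / (|sin(π t)| * Γ t)
    have hG1 : |Real.Gamma (1 - t)| = π / (|Real.sin (π * t)| * Real.Gamma t) := by
      have : Real.Gamma (1 - t) = π / Real.sin (π * t) / Real.Gamma t := by
        field_simp at hrefl1 ⊢
        linarith [hrefl1]
      rw [this, abs_div, abs_div, abs_of_pos Real.pi_pos, abs_of_pos hG1pos, div_div]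
    have hG2 : |Real.Gamma (1 - (k:ℝ) * (1 - α))| =
        π / (|Real.sin (π * ((k:ℝ) * (1 - α)))| * Real.Gamma ((k:ℝ) * (1 - α))) := by
      have : Real.Gamma (1 - (k:ℝ) * (1 - α)) = π / Real.sin (π * ((k:ℝ)*(1-α))) / Real.Gamma ((k:ℝ)*(1-α)) := by
        field_simp at hrefl2 ⊢
        linarith [hrefl2]
      rw [this, abs_div, abs_div, abs_of_pos Real.pi_pos, abs_of_pos hG2pos, div_div]
    -- |sin(π k (1-α))| = |sin(π t)|
    have hsineq : |Real.sin (π * ((k:ℝ) * (1 - α)))| = |Real.sin (π * t)| := by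
      have : π * ((k:ℝ) * (1 - α)) = (k:ℝ) * π - π * t := by rw [htdef]; ring
      rw [this, Real.sin_nat_mul_pi_sub, abs_neg, abs_mul, abs_pow, abs_neg, abs_one,
        one_pow, one_mul]
    -- rewrite the absolute value of the term
    have habs : |(-1:ℝ)^k / (k.factorial * Real.Gamma (1 - t)
        * Real.Gamma (1 - (k:ℝ) * (1 - α)))| =
        Real.Gamma t * Real.Gamma ((k:ℝ) * (1 - α)) * |Real.sin (π * t)|^2
          / (π^2 * k.factorial) := by
      rw [abs_div, abs_pow, abs_neg, abs_one, one_pow, abs_mul, abs_mul, hG1, hG2, hsineq,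
        Nat.abs_cast]
      have hπ : (0:ℝ) < π := Real.pi_pos
      have hfac : (0:ℝ) < (k.factorial : ℝ) := by positivity
      have hs : 0 < |Real.sin (π * t)| := abs_pos.mpr hsin1ne
      rw [div_eq_div_iff (by positivity) (by positivity)]
      field_simp
    rw [habs]
    have hsinle : |Real.sin (π * t)| ≤ π * t := by
      calc |Real.sin (π * t)| ≤ |π * t| := (Real.abs_sin_lt_abs (by positivity)).le
        _ = π * t := abs_of_pos (by positivity)
    have hπ : (0:ℝ) < π := Real.pi_pos
    have hfac : (0:ℝ) < (k.factorial : ℝ) := by positivity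
    rcases eq_or_lt_of_le hk with hk1 | hk2
    · -- k = 1
      have hk1' : k = 1 := hk1.symm
      subst hk1'
      have ht : t = α := by rw [htdef]; norm_num
      have hsinpos : 0 < Real.sin (π * α) := by
        apply Real.sin_pos_of_pos_of_lt_pi (by positivity)
        nlinarith [Real.pi_pos]
      have hre := Real.Gamma_mul_Gamma_one_sub α
      have h1a : ((1:ℕ):ℝ) * (1 - α) = 1 - α := by norm_num
      rw [ht, h1a, hre, Nat.factorial_one, Nat.cast_one, abs_of_pos hsinpos,
        div_le_iff₀ (by positivity)]
      have hsle : Real.sin (π * α) ≤ π * α := Real.sin_le (by positivity)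
      have hsq : π / Real.sin (π * α) * Real.sin (π * α) ^ 2 = π * Real.sin (π * α) := by
        field_simp
      rw [hsq]
      nlinarith
    · -- k ≥ 2
      have hk2' : (2:ℝ) ≤ k := by exact_mod_cast hk2
      have hb1 : (1:ℝ) ≤ (k:ℝ) * (1 - α) := by nlinarith
      have hcore : Real.Gamma (t + 1) * Real.Gamma ((k:ℝ) * (1 - α))
          ≤ Real.Gamma (t + (k:ℝ) * (1 - α)) := gamma_superadd ht0 hb1
      have hsum : t + (k:ℝ) * (1 - α) = (k:ℝ) := by rw [htdef]; ring
      rw [hsum] at hcore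
      have hGk : Real.Gamma (k:ℝ) = ((k-1).factorial : ℝ) := by
        have h := Real.Gamma_nat_eq_factorial (k-1)
        have e : ((k-1:ℕ):ℝ) + 1 = (k:ℝ) := by
          rw [Nat.cast_sub (by omega : 1 ≤ k)]; norm_num
        rw [e] at h
        exact h
      have hGadd : Real.Gamma (t + 1) = t * Real.Gamma t := Real.Gamma_add_one ht0.ne'
      rw [hGadd, hGk] at hcore
      have hfack : (k.factorial : ℝ) = (k:ℝ) * ((k-1).factorial : ℝ) := by
        exact_mod_cast (Nat.mul_factorial_pred (by omega : k ≠ 0)).symm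
      rw [div_le_iff₀ (by positivity)]
      have hsin2 : |Real.sin (π * t)|^2 ≤ (π * t)^2 :=
        pow_le_pow_left₀ (abs_nonneg _) hsinle 2
      have hGGpos : 0 < Real.Gamma t * Real.Gamma ((k:ℝ)*(1-α)) := mul_pos hG1pos hG2pos
      calc Real.Gamma t * Real.Gamma ((k:ℝ)*(1-α)) * |Real.sin (π * t)|^2
          ≤ Real.Gamma t * Real.Gamma ((k:ℝ)*(1-α)) * (π * t)^2 :=
            mul_le_mul_of_nonneg_left hsin2 hGGpos.le
        _ = (t * Real.Gamma t * Real.Gamma ((k:ℝ)*(1-α))) * (π^2 * t) := by ring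
        _ ≤ ((k-1).factorial : ℝ) * (π^2 * t) :=
            mul_le_mul_of_nonneg_right hcore (by positivity)
        _ = α * (π^2 * (k.factorial:ℝ)) := by rw [hfack, htdef]; ring

/-- for fixed `x > 1`,
`Σ_k (−1)^k/(k! Γ(1−kα) Γ(1−k(1−α))) · x^{−k} → 1` as `α → 0⁺`
(`Real.Gamma` vanishes at the nonpositive-integer poles, so `1/Γ` is `0` there);
this is the limit of `(1/π)·a_{1−α}^{−1}(x^{1/α})`. -/
theorem free_stable_distribution_tendsto_one {x : ℝ} (hx : 1 < x) :
    Filter.Tendsto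
      (fun α : ℝ => ∑' k : ℕ,
        (-1 : ℝ) ^ k /
          (k.factorial * Real.Gamma (1 - (k : ℝ) * α) * Real.Gamma (1 - (k : ℝ) * (1 - α))) *
          (1 / x) ^ k)
      (nhdsWithin 0 (Set.Ioi 0)) (nhds 1) := by
  have hx0 : (0:ℝ) < x := by linarith
  have hq0 : (0:ℝ) ≤ 1 / x := by positivity
  have hq1 : (1:ℝ) / x < 1 := by rw [div_lt_one hx0]; linarith
  set f : ℝ → ℕ → ℝ := fun α k =>
    (-1 : ℝ) ^ k /
      (k.factorial * Real.Gamma (1 - (k : ℝ) * α) * Real.Gamma (1 - (k : ℝ) * (1 - α))) *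
      (1 / x) ^ k with hf
  have hgeom : Summable (fun k : ℕ => (1/x)^(k+1)) := by
    apply Summable.comp_injective (summable_geometric_of_lt_one hq0 hq1)
    exact add_left_injective 1
  set C : ℝ := ∑' k : ℕ, (1/x)^(k+1) with hC
  have key : ∀ α ∈ Set.Ioo (0:ℝ) (1/2), |∑' k : ℕ, f α k - 1| ≤ α * C := by
    rintro α ⟨hα0, hα2⟩
    have bound : ∀ k : ℕ, ‖f α (k+1)‖ ≤ α * (1/x)^(k+1) := by
      intro k
      have h1 := key_bound hα0 hα2 (Nat.le_add_left 1 k)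
      rw [hf]
      rw [Real.norm_eq_abs, abs_mul, abs_pow, abs_of_nonneg hq0]
      exact mul_le_mul_of_nonneg_right h1 (by positivity)
    have hnormsum : Summable (fun k : ℕ => ‖f α (k+1)‖) :=
      Summable.of_nonneg_of_le (fun k => norm_nonneg _) bound (hgeom.mul_left α)
    have hsum1 : Summable (fun k : ℕ => f α (k+1)) := hnormsum.of_norm
    have hsum : Summable (f α) := (summable_nat_add_iff 1).mp hsum1
    have hzero : f α 0 = 1 := by
      rw [hf]
      simp [Real.Gamma_one]
    rw [Summable.tsum_eq_zero_add hsum, hzero, add_sub_cancel_left]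
    calc |∑' k : ℕ, f α (k+1)| ≤ ∑' k : ℕ, ‖f α (k+1)‖ := norm_tsum_le_tsum_norm hnormsum
      _ ≤ ∑' k : ℕ, α * (1/x)^(k+1) := Summable.tsum_le_tsum bound hnormsum (hgeom.mul_left α)
      _ = α * C := by rw [hC, tsum_mul_left]
  have hev : ∀ᶠ α in nhdsWithin (0:ℝ) (Set.Ioi 0), ‖∑' k : ℕ, f α k - 1‖ ≤ α * C := by
    filter_upwards [Ioo_mem_nhdsGT_of_mem (Set.left_mem_Ico.mpr (by norm_num : (0:ℝ) < 1/2))]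
      with α hα
    exact key α hα
  have hg : Filter.Tendsto (fun α : ℝ => α * C) (nhdsWithin 0 (Set.Ioi 0)) (nhds 0) := by
    have : Filter.Tendsto (fun α : ℝ => α * C) (nhds 0) (nhds (0 * C)) :=
      (continuous_id.mul continuous_const).tendsto 0
    rw [zero_mul] at this
    exact this.mono_left nhdsWithin_le_nhds
  have hfinal : Filter.Tendsto (fun α : ℝ => ∑' k : ℕ, f α k - 1)
      (nhdsWithin 0 (Set.Ioi 0)) (nhds 0) := squeeze_zero_norm' hev hg
  have h := hfinal.add_const 1
  rw [zero_add] at h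
  simp only [sub_add_cancel] at h
  exact h
end

section
/- For every 0 < α < 1 and every θ ∈ (0,π), setting r = (sin(αθ)/sin(θ))^{1/(1−α)}, the complex number −r·e^{iθ} + r^α·e^{iαθ} is real and equals a_α(θ); that is, r·sin(θ) = r^α·sin(αθ) and −r·cos(θ) + r^α·cos(αθ) = a_α(θ). -/
open Real MeasureTheory

/-- for `0 < α < 1` and `θ ∈ (0,π)`, with `r = (sin(αθ)/sin θ)^{1/(1−α)}`,
the complex number `−r e^{iθ} + r^α e^{iαθ}` is real and equals `a_α(θ)`: its imaginary
part vanishes, `r sin θ = r^α sin(αθ)`, and `−r cos θ + r^α cos(αθ) = a_α(θ)`. -/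
theorem kanter_contour {α θ : ℝ} (hα0 : 0 < α) (hα1 : α < 1) (hθ : θ ∈ Set.Ioo 0 π)
    {r : ℝ} (hr : r = (Real.sin (α * θ) / Real.sin θ) ^ (1 / (1 - α))) :
    r * Real.sin θ = r ^ α * Real.sin (α * θ) ∧
    -r * Real.cos θ + r ^ α * Real.cos (α * θ) = kanterA α θ := by
  obtain ⟨hθ0, hθπ⟩ := hθ
  have h1α : (0:ℝ) < 1 - α := by linarith
  have hsθ : 0 < Real.sin θ := Real.sin_pos_of_pos_of_lt_pi hθ0 hθπ
  have h1 : 0 < Real.sin (α * θ) :=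
    Real.sin_pos_of_pos_of_lt_pi (mul_pos hα0 hθ0)
      (lt_trans (by nlinarith) hθπ)
  have h2 : 0 < Real.sin ((1 - α) * θ) :=
    Real.sin_pos_of_pos_of_lt_pi (mul_pos h1α hθ0)
      (lt_trans (by nlinarith) hθπ)
  set s : ℝ := Real.sin (α * θ) / Real.sin θ with hs_def
  have hs : 0 < s := div_pos h1 hsθ
  have hsin : Real.sin (α * θ) = s * Real.sin θ := by
    rw [hs_def, div_mul_cancel₀ _ hsθ.ne']
  have hrα : r ^ α = s ^ (α / (1 - α)) := by
    rw [hr, ← Real.rpow_mul hs.le, div_mul_eq_mul_div, one_mul]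
  have hrsplit : r = s ^ (α / (1 - α)) * s := by
    rw [hr]
    rw [show (1 : ℝ) / (1 - α) = α / (1 - α) + 1 by field_simp; ring]
    rw [Real.rpow_add hs, Real.rpow_one]
  constructor
  · rw [hrα, hrsplit, hsin]; ring
  · have hsub : Real.sin ((1 - α) * θ)
        = Real.sin θ * Real.cos (α * θ) - Real.cos θ * Real.sin (α * θ) := by
      rw [show (1 - α) * θ = θ - α * θ by ring, Real.sin_sub]
    rw [hrα, hrsplit]
    rw [kanterA, kanterB, kanterC, kanterC, ← hs_def]
    rw [Real.mul_rpow (Real.rpow_nonneg hs.le _)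
        (Real.rpow_nonneg (div_pos h2 hsθ).le _)]
    rw [← Real.rpow_mul hs.le, ← Real.rpow_mul (div_pos h2 hsθ).le]
    rw [show (1 - α) * (1 / (1 - α)) = 1 by field_simp, Real.rpow_one]
    rw [show α * (1 / (1 - α)) = α / (1 - α) by ring]
    rw [hsub, hsin]
    field_simp
    ring
end
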